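/- Let λ_1,…,λ_n be n pairwise distinct elements of a field of characteristic zero, let 1 ≤ k ≤ n, and let P(x_1,…,x_k) be a symmetric polynomial of total degree at most k(n−k) in k variables. Then k! · Σ_{J} P((λ_j)_{j∈J}) / ∏_{j∈J, i∉J} (λ_j − λ_i) equals the coefficient of the monomial x_1^{n−1}⋯x_k^{n−1} in the polynomial P(x_1,…,x_k) · ∏_{i≠j} (x_i − x_j), where the sum ranges over all k-element subsets J of {1,…,n}, and in P((λ_j)_{j∈J}) the elements λ_j for j ∈ J are substituted for the variables (in any order, which is immaterial since P is symmetric). -/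

import Mathlib

open Finset
open Polynomial

-- Single-variable: coefficient of X^(n-1) via Lagrange interpolation
lemma coeff_eq_sum_eval {K : Type*} [Field K] {n : ℕ} (hn : 1 ≤ n)
    (v : Fin n → K) (hv : Function.Injective v) (f : K[X]) (hf : f.degree < n) :
    f.coeff (n - 1) = ∑ i : Fin n, f.eval (v i) * (∏ j ∈ univ.erase i, (v i - v j))⁻¹ := by
  classical
  have hvs : Set.InjOn v (univ : Finset (Fin n)) := hv.injOn
  have hcard : (#(univ : Finset (Fin n)) : WithBot ℕ) = n := by simp
  have h := Lagrange.eq_interpolate hvs (by rwa [hcard])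
  conv_lhs => rw [h]
  rw [Lagrange.interpolate_apply, finset_sum_coeff]
  refine Finset.sum_congr rfl fun i _ => ?_
  rw [coeff_C_mul]
  congr 1
  -- coeff (n-1) of Lagrange basis is product of inverses
  have hb : (Lagrange.basis univ v i).natDegree = n - 1 := by
    rw [Lagrange.natDegree_basis hvs (mem_univ i)]; simp
  have : (Lagrange.basis univ v i).coeff (n - 1) = (Lagrange.basis univ v i).leadingCoeff := by
    rw [Polynomial.leadingCoeff, hb]
  rw [this, Lagrange.basis, leadingCoeff_prod, ← Finset.prod_inv_distrib]
  refine Finset.prod_congr rfl fun j hj => ?_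
  have hij : v i ≠ v j := fun hh => (mem_erase.mp hj).1 (hv hh).symm
  rw [Lagrange.basisDivisor, leadingCoeff_mul, leadingCoeff_C, leadingCoeff_X_sub_C, mul_one]

lemma sum_pow_mul_inv {K : Type*} [Field K] {n : ℕ} (hn : 1 ≤ n)
    (v : Fin n → K) (hv : Function.Injective v) (m : ℕ) (hm : m ≤ n - 1) :
    ∑ i : Fin n, v i ^ m * (∏ j ∈ univ.erase i, (v i - v j))⁻¹
      = if m = n - 1 then 1 else 0 := by
  have hdeg : (X ^ m : K[X]).degree < n := by
    rw [degree_X_pow]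
    exact_mod_cast lt_of_le_of_lt hm (by omega)
  have := coeff_eq_sum_eval hn v hv (X ^ m) hdeg
  simp only [eval_pow, eval_X] at this
  rw [← this, coeff_X_pow]
  simp [eq_comm]

lemma prod_offDiag_eq {β : Type*} [CommMonoid β] {k : ℕ} (f : Fin k × Fin k → β) :
    ∏ p ∈ (univ : Finset (Fin k)).offDiag, f p = ∏ a, ∏ b ∈ univ.erase a, f (a, b) := by
  rw [show (univ : Finset (Fin k)).offDiag = (univ ×ˢ univ).filter (fun a : Fin k × Fin k => a.1 ≠ a.2) by ext x; simp [Finset.mem_offDiag], Finset.prod_filter, Finset.prod_product]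
  refine Finset.prod_congr rfl fun a _ => ?_
  rw [← Finset.prod_filter]
  refine Finset.prod_congr ?_ fun _ _ => rfl
  ext b; simp [eq_comm, Ne, and_comm]

lemma value_of_inj {K : Type*} [Field K] {n k : ℕ} (lam : Fin n → K)
    (hlam : Function.Injective lam) (P : MvPolynomial (Fin k) K) (hP : P.IsSymmetric)
    (J : Finset (Fin n)) (hJ : J.card = k) (t : Fin k → Fin n) (ht : Function.Injective t)
    (himg : Finset.image t Finset.univ = J) :
    MvPolynomial.eval (fun m => lam (t m))
        (P * ∏ p ∈ Finset.univ.offDiag, (MvPolynomial.X p.1 - MvPolynomial.X p.2))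
      * ∏ m, (∏ j ∈ univ.erase (t m), (lam (t m) - lam j))⁻¹
    = MvPolynomial.eval (fun i => lam ((J.orderIsoOfFin hJ i : Fin n))) P /
        ∏ j ∈ J, ∏ i ∈ Jᶜ, (lam j - lam i) := by
  classical
  have htm : ∀ m, t m ∈ J := fun m => himg ▸ Finset.mem_image_of_mem t (mem_univ m)
  set σf : Fin k → Fin k := fun m => (J.orderIsoOfFin hJ).symm ⟨t m, htm m⟩ with hσf
  have hσinj : Function.Injective σf := by
    intro a b hab
    have h2 : (⟨t a, htm a⟩ : J) = ⟨t b, htm b⟩ := by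
      have := congrArg (J.orderIsoOfFin hJ) hab
      simpa [hσf] using this
    exact ht (congrArg Subtype.val h2)
  have hto : ∀ m, t m = ((J.orderIsoOfFin hJ (σf m) : Fin n)) := by
    intro m; simp [hσf]
  have hevalP : MvPolynomial.eval (fun m => lam (t m)) P
      = MvPolynomial.eval (fun i => lam ((J.orderIsoOfFin hJ i : Fin n))) P := by
    obtain ⟨σ, hσ⟩ : ∃ σ : Equiv.Perm (Fin k), ∀ m, σ m = σf m :=
      ⟨Equiv.ofBijective σf ((Finite.injective_iff_bijective).mp hσinj), fun m => rfl⟩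
    calc MvPolynomial.eval (fun m => lam (t m)) P
        = MvPolynomial.eval ((fun i => lam ((J.orderIsoOfFin hJ i : Fin n))) ∘ σ) P := by
          have he : (fun m => lam (t m)) = ((fun i => lam ((J.orderIsoOfFin hJ i : Fin n))) ∘ σ) := by
            funext m; rw [Function.comp_apply, hσ m, ← hto m]
          rw [he]
      _ = MvPolynomial.eval (fun i => lam ((J.orderIsoOfFin hJ i : Fin n)))
            (MvPolynomial.rename σ P) := (MvPolynomial.eval_rename _ _ _).symm
      _ = _ := by rw [hP σ]
  set W : K := ∏ p ∈ (univ : Finset (Fin k)).offDiag, (lam (t p.1) - lam (t p.2)) with hW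
  have hWne : W ≠ 0 := by
    rw [hW, Finset.prod_ne_zero_iff]
    intro p hp
    rw [sub_ne_zero]
    exact fun h => (Finset.mem_offDiag.mp hp).2.2 (ht (hlam h))
  set C : K := ∏ j ∈ J, ∏ i ∈ Jᶜ, (lam j - lam i) with hC
  have hevalV : MvPolynomial.eval (fun m => lam (t m))
      (∏ p ∈ Finset.univ.offDiag,
        (MvPolynomial.X p.1 - MvPolynomial.X p.2) : MvPolynomial (Fin k) K) = W := by
    rw [map_prod, hW]
    refine Finset.prod_congr rfl fun p _ => ?_
    simp
  have hsplit : ∀ m : Fin k, (univ : Finset (Fin n)).erase (t m) = (J.erase (t m)) ∪ Jᶜ := by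
    intro m; ext x
    simp only [Finset.mem_erase, Finset.mem_union, Finset.mem_compl, Finset.mem_univ, and_true]
    constructor
    · intro hx
      by_cases hxJ : x ∈ J
      · exact Or.inl ⟨hx, hxJ⟩
      · exact Or.inr hxJ
    · rintro (⟨hx, _⟩ | hx)
      · exact hx
      · exact fun h => hx (h ▸ htm m)
  have hdisj : ∀ m : Fin k, Disjoint (J.erase (t m)) Jᶜ := fun m =>
    Finset.disjoint_right.mpr fun x hx => fun hx2 =>
      (Finset.mem_compl.mp hx) (Finset.mem_of_mem_erase hx2)
  have herase : ∀ m : Fin k, J.erase (t m) = Finset.image t (univ.erase m) := by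
    intro m; ext x
    simp only [Finset.mem_erase, Finset.mem_image, Finset.mem_univ, and_true, ← himg]
    constructor
    · rintro ⟨hne, b, -, rfl⟩
      exact ⟨b, fun hbm => hne (by rw [hbm]), rfl⟩
    · rintro ⟨b, hbm, rfl⟩
      exact ⟨fun h => hbm (ht h), b, trivial, rfl⟩
  have hDen : ∏ m, ∏ j ∈ univ.erase (t m), (lam (t m) - lam j) = W * C := by
    calc ∏ m, ∏ j ∈ univ.erase (t m), (lam (t m) - lam j)
        = ∏ m, ((∏ j ∈ J.erase (t m), (lam (t m) - lam j)) *
            ∏ j ∈ Jᶜ, (lam (t m) - lam j)) := by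
          refine Finset.prod_congr rfl fun m _ => ?_
          rw [hsplit m, Finset.prod_union (hdisj m)]
      _ = (∏ m, ∏ j ∈ J.erase (t m), (lam (t m) - lam j)) *
            ∏ m, ∏ j ∈ Jᶜ, (lam (t m) - lam j) := Finset.prod_mul_distrib
      _ = W * C := by
          congr 1
          · rw [hW, prod_offDiag_eq]
            refine Finset.prod_congr rfl fun m _ => ?_
            rw [herase m, Finset.prod_image (fun a _ b _ h => ht h)]
          · rw [hC, ← himg, Finset.prod_image (fun a _ b _ h => ht h)]
  rw [map_mul, hevalV, hevalP, Finset.prod_inv_distrib, hDen, mul_inv]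
  rw [show MvPolynomial.eval (fun i => lam ((J.orderIsoOfFin hJ i : Fin n))) P * W *
      (W⁻¹ * C⁻¹) = MvPolynomial.eval (fun i => lam ((J.orderIsoOfFin hJ i : Fin n))) P *
      (W * W⁻¹) * C⁻¹ by ring, mul_inv_cancel₀ hWne, mul_one, div_eq_mul_inv]


/-- Interpolation identity for the ordinary Grassmannian (Theorem 1 of the author's previous
work).  Let `λ_1,…,λ_n` be pairwise distinct, `1 ≤ k ≤ n`, and `P(x_1,…,x_k)` a symmetric
polynomial of total degree at most `k(n-k)`.  Then
`k! · Σ_{J ⊆ [n], |J| = k} P((λ_j)_{j ∈ J}) / ∏_{j ∈ J, i ∉ J}(λ_j - λ_i)` equals the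
coefficient of `x_1^{n-1}⋯x_k^{n-1}` in `P · ∏_{i≠j}(x_i - x_j)`. -/
theorem factorial_mul_sum_subsets_eq_coeff
    {K : Type*} [Field K] [CharZero K] (n k : ℕ) (hk : 1 ≤ k) (hkn : k ≤ n)
    (lam : Fin n → K) (hlam : Function.Injective lam)
    (P : MvPolynomial (Fin k) K) (hP : P.IsSymmetric)
    (hdeg : P.totalDegree ≤ k * (n - k)) :
    (Nat.factorial k : K) *
        ∑ J : {J : Finset (Fin n) // J.card = k},
          MvPolynomial.eval (fun i => lam ((J.1.orderIsoOfFin J.2 i : Fin n))) P /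
            ∏ j ∈ J.1, ∏ i ∈ J.1ᶜ, (lam j - lam i)
      = MvPolynomial.coeff (Finsupp.equivFunOnFinite.symm fun _ => n - 1)
          (P * ∏ p ∈ Finset.univ.offDiag, (MvPolynomial.X p.1 - MvPolynomial.X p.2)) := by
  classical
  have hn : 1 ≤ n := hk.trans hkn
  set Q : MvPolynomial (Fin k) K :=
    P * ∏ p ∈ Finset.univ.offDiag, (MvPolynomial.X p.1 - MvPolynomial.X p.2) with hQdef
  have hdegQ : Q.totalDegree ≤ k * (n - 1) := by
    have h1 : (∏ p ∈ (Finset.univ : Finset (Fin k)).offDiag,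
        (MvPolynomial.X p.1 - MvPolynomial.X p.2) : MvPolynomial (Fin k) K).totalDegree
        ≤ k * (k - 1) := by
      refine le_trans (MvPolynomial.totalDegree_finset_prod _ _) ?_
      calc ∑ p ∈ (Finset.univ : Finset (Fin k)).offDiag,
            (MvPolynomial.X p.1 - MvPolynomial.X p.2 : MvPolynomial (Fin k) K).totalDegree
          ≤ ∑ _p ∈ (Finset.univ : Finset (Fin k)).offDiag, 1 := by
            refine Finset.sum_le_sum fun p _ => ?_
            rw [sub_eq_add_neg]
            refine le_trans (MvPolynomial.totalDegree_add _ _) ?_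
            simp [MvPolynomial.totalDegree_neg, MvPolynomial.totalDegree_X]
        _ = (Finset.univ : Finset (Fin k)).offDiag.card := by simp
        _ = k * (k - 1) := by
            rw [Finset.offDiag_card]
            simp only [Finset.card_univ, Fintype.card_fin]
            cases k with
            | zero => simp
            | succ m => rw [Nat.succ_sub_one, Nat.mul_succ]; omega
    calc Q.totalDegree ≤ P.totalDegree + _ := MvPolynomial.totalDegree_mul _ _
      _ ≤ k * (n - k) + k * (k - 1) := add_le_add hdeg h1
      _ ≤ k * (n - 1) := by
          rw [← Nat.mul_add]
          exact Nat.mul_le_mul_left _ (by omega)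
  have key : MvPolynomial.coeff (Finsupp.equivFunOnFinite.symm fun _ => n - 1) Q
      = ∑ t : Fin k → Fin n, MvPolynomial.eval (fun m => lam (t m)) Q *
          ∏ m, (∏ j ∈ univ.erase (t m), (lam (t m) - lam j))⁻¹ := by
    have expand : ∀ t : Fin k → Fin n,
        MvPolynomial.eval (fun m => lam (t m)) Q *
            ∏ m, (∏ j ∈ univ.erase (t m), (lam (t m) - lam j))⁻¹
        = ∑ d ∈ Q.support, MvPolynomial.coeff d Q *
            ∏ m, (lam (t m) ^ d m * (∏ j ∈ univ.erase (t m), (lam (t m) - lam j))⁻¹) := by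
      intro t
      rw [MvPolynomial.eval_eq', Finset.sum_mul]
      refine Finset.sum_congr rfl fun d _ => ?_
      rw [mul_assoc, ← Finset.prod_mul_distrib]
    have inner : ∀ d ∈ Q.support,
        (∑ t : Fin k → Fin n, MvPolynomial.coeff d Q *
          ∏ m, (lam (t m) ^ d m * (∏ j ∈ univ.erase (t m), (lam (t m) - lam j))⁻¹))
        = if d = Finsupp.equivFunOnFinite.symm fun _ => n - 1
            then MvPolynomial.coeff d Q else 0 := by
      intro d hd
      rw [← Finset.mul_sum]
      have hswap : (∑ t : Fin k → Fin n, ∏ m, (lam (t m) ^ d m *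
            (∏ j ∈ univ.erase (t m), (lam (t m) - lam j))⁻¹))
          = ∏ m, ∑ i : Fin n, lam i ^ d m * (∏ j ∈ univ.erase i, (lam i - lam j))⁻¹ := by
        rw [Finset.prod_univ_sum, Fintype.piFinset_univ]
      rw [hswap]
      have hsumd : ∑ m, d m ≤ k * (n - 1) := by
        refine le_trans ?_ hdegQ
        have h := MvPolynomial.le_totalDegree hd
        rwa [Finsupp.sum_fintype _ _ (fun _ => rfl)] at h
      by_cases hall : ∀ m, d m = n - 1
      · have hdt : d = Finsupp.equivFunOnFinite.symm fun _ => n - 1 := by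
          rw [Equiv.eq_symm_apply]
          funext m
          exact hall m
        rw [if_pos hdt]
        have h1 : ∀ m : Fin k, (∑ i : Fin n, lam i ^ d m *
            (∏ j ∈ univ.erase i, (lam i - lam j))⁻¹) = 1 := by
          intro m
          rw [hall m, sum_pow_mul_inv hn lam hlam _ le_rfl, if_pos rfl]
        rw [Finset.prod_congr rfl fun m _ => h1 m, Finset.prod_const_one, mul_one]
      · have hdt : ¬ d = Finsupp.equivFunOnFinite.symm fun _ => n - 1 := by
          intro h; apply hall; intro m
          rw [h]; rfl
        rw [if_neg hdt]
        have hex : ∃ m0, d m0 < n - 1 := by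
          by_contra hcon
          push_neg at hcon
          push_neg at hall
          obtain ⟨m1, hm1⟩ := hall
          have hlt : k * (n - 1) < ∑ m, d m := by
            calc k * (n - 1) = ∑ _m : Fin k, (n - 1) := by
                  rw [Finset.sum_const, Finset.card_univ, Fintype.card_fin, smul_eq_mul,
                    mul_comm]
              _ < ∑ m, d m := Finset.sum_lt_sum (fun m _ => hcon m)
                  ⟨m1, Finset.mem_univ _, lt_of_le_of_ne (hcon m1) (Ne.symm hm1)⟩
          omega
        obtain ⟨m0, hm0⟩ := hex
        rw [Finset.prod_eq_zero (Finset.mem_univ m0)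
          (by rw [sum_pow_mul_inv hn lam hlam _ (le_of_lt hm0), if_neg (by omega)]), mul_zero]
    rw [Finset.sum_congr rfl fun t _ => expand t, Finset.sum_comm,
      Finset.sum_congr rfl inner,
      Finset.sum_ite_eq' Q.support _ (fun d => MvPolynomial.coeff d Q)]
    split
    · rfl
    · next h => exact MvPolynomial.notMem_support_iff.mp h
  have step2 : (∑ t : Fin k → Fin n, MvPolynomial.eval (fun m => lam (t m)) Q *
        ∏ m, (∏ j ∈ univ.erase (t m), (lam (t m) - lam j))⁻¹)
      = ∑ t ∈ univ.filter fun t : Fin k → Fin n => Function.Injective t,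
          MvPolynomial.eval (fun m => lam (t m)) Q *
            ∏ m, (∏ j ∈ univ.erase (t m), (lam (t m) - lam j))⁻¹ := by
    rw [← Finset.sum_filter_add_sum_filter_not univ
      (fun t : Fin k → Fin n => Function.Injective t)]
    have hz : (∑ t ∈ univ.filter fun t : Fin k → Fin n => ¬ Function.Injective t,
        MvPolynomial.eval (fun m => lam (t m)) Q *
          ∏ m, (∏ j ∈ univ.erase (t m), (lam (t m) - lam j))⁻¹) = 0 := by
      refine Finset.sum_eq_zero fun t ht => ?_
      have hni := (Finset.mem_filter.mp ht).2
      have h0 : MvPolynomial.eval (fun m => lam (t m)) Q = 0 := by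
        rw [hQdef, map_mul]
        have hV0 : MvPolynomial.eval (fun m => lam (t m))
            (∏ p ∈ Finset.univ.offDiag,
              (MvPolynomial.X p.1 - MvPolynomial.X p.2) : MvPolynomial (Fin k) K) = 0 := by
          simp only [Function.Injective] at hni
          push_neg at hni
          obtain ⟨a, b, hab, hne⟩ := hni
          rw [map_prod]
          refine Finset.prod_eq_zero (i := (a, b))
            (Finset.mem_offDiag.mpr ⟨Finset.mem_univ a, Finset.mem_univ b, hne⟩) ?_
          simp [hab]
        rw [hV0, mul_zero]
      rw [h0, zero_mul]
    rw [hz, add_zero]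
  have hembInj : ∀ (J : Finset (Fin n)) (hJ : J.card = k) (σ : Equiv.Perm (Fin k)),
      Function.Injective (fun m => ((J.orderIsoOfFin hJ (σ m) : Fin n))) := by
    intro J hJ σ a b hab
    exact σ.injective ((J.orderIsoOfFin hJ).injective (Subtype.ext hab))
  have hembimg : ∀ (J : Finset (Fin n)) (hJ : J.card = k) (σ : Equiv.Perm (Fin k)),
      Finset.image (fun m => ((J.orderIsoOfFin hJ (σ m) : Fin n))) univ = J := by
    intro J hJ σ
    apply Finset.eq_of_subset_of_card_le
    · intro x hx
      obtain ⟨m, -, rfl⟩ := Finset.mem_image.mp hx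
      exact (J.orderIsoOfFin hJ (σ m)).2
    · rw [Finset.card_image_of_injective _ (hembInj J hJ σ), Finset.card_univ,
        Fintype.card_fin, hJ]
  have hbij : (∑ t ∈ univ.filter fun t : Fin k → Fin n => Function.Injective t,
        MvPolynomial.eval (fun m => lam (t m)) Q *
          ∏ m, (∏ j ∈ univ.erase (t m), (lam (t m) - lam j))⁻¹)
      = ∑ p : {J : Finset (Fin n) // J.card = k} × Equiv.Perm (Fin k),
          MvPolynomial.eval (fun i => lam ((p.1.1.orderIsoOfFin p.1.2 i : Fin n))) P /
            ∏ j ∈ p.1.1, ∏ i ∈ (p.1.1)ᶜ, (lam j - lam i) := by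
    refine (Finset.sum_bij
      (fun (p : {J : Finset (Fin n) // J.card = k} × Equiv.Perm (Fin k)) _ =>
        fun m => ((p.1.1.orderIsoOfFin p.1.2 (p.2 m) : Fin n))) ?_ ?_ ?_ ?_).symm
    · intro p _
      rw [Finset.mem_filter]
      exact ⟨Finset.mem_univ _, hembInj p.1.1 p.1.2 p.2⟩
    · intro p1 hp1 p2 hp2 h5
      obtain ⟨⟨J1, hJ1⟩, σ⟩ := p1
      obtain ⟨⟨J2, hJ2⟩, τ⟩ := p2
      have hfun : (fun m => ((J1.orderIsoOfFin hJ1 (σ m) : Fin n)))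
          = fun m => ((J2.orderIsoOfFin hJ2 (τ m) : Fin n)) := h5
      have hJ12 : J1 = J2 := by
        rw [← hembimg J1 hJ1 σ, ← hembimg J2 hJ2 τ, hfun]
      subst hJ12
      have hστ : σ = τ := by
        ext m
        have h := congrFun hfun m
        exact congrArg Fin.val ((J1.orderIsoOfFin hJ1).injective (Subtype.coe_injective h))
      subst hστ
      rfl
    · intro t ht
      have htinj : Function.Injective t := (Finset.mem_filter.mp ht).2
      have hJcard : (Finset.image t univ).card = k := by
        rw [Finset.card_image_of_injective _ htinj, Finset.card_univ, Fintype.card_fin]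
      have htm : ∀ m, t m ∈ Finset.image t univ :=
        fun m => Finset.mem_image_of_mem t (Finset.mem_univ m)
      set σf : Fin k → Fin k :=
        fun m => ((Finset.image t univ).orderIsoOfFin hJcard).symm ⟨t m, htm m⟩ with hσf
      have hσinj : Function.Injective σf := by
        intro a b hab
        have h2 : (⟨t a, htm a⟩ : (Finset.image t univ : Finset (Fin n))) = ⟨t b, htm b⟩ := by
          have h3 := congrArg ((Finset.image t univ).orderIsoOfFin hJcard) hab
          simpa [hσf] using h3
        exact htinj (congrArg Subtype.val h2)
      refine ⟨⟨⟨Finset.image t univ, hJcard⟩,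
        Equiv.ofBijective σf (Finite.injective_iff_bijective.mp hσinj)⟩,
        Finset.mem_univ _, ?_⟩
      funext m
      show (((Finset.image t univ).orderIsoOfFin hJcard) (σf m) : Fin n) = t m
      simp [hσf]
    · intro p _
      rw [hQdef]
      exact (value_of_inj lam hlam P hP p.1.1 p.1.2 _
        (hembInj p.1.1 p.1.2 p.2) (hembimg p.1.1 p.1.2 p.2)).symm
  rw [key, step2, hbij, Fintype.sum_prod_type, Finset.mul_sum]
  refine Finset.sum_congr rfl fun J _ => ?_
  have hc : (∑ _σ : Equiv.Perm (Fin k),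
      MvPolynomial.eval (fun i => lam ((J.1.orderIsoOfFin J.2 i : Fin n))) P /
        ∏ j ∈ J.1, ∏ i ∈ (J.1)ᶜ, (lam j - lam i))
      = (Nat.factorial k : K) *
        (MvPolynomial.eval (fun i => lam ((J.1.orderIsoOfFin J.2 i : Fin n))) P /
          ∏ j ∈ J.1, ∏ i ∈ (J.1)ᶜ, (lam j - lam i)) := by
    rw [Finset.sum_const, Finset.card_univ, Fintype.card_perm, Fintype.card_fin, nsmul_eq_mul]
  exact hc.symm
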